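/- Let (G,w) be a weighted graph. The weight w extends to a pseudomultiplicative metric on V(G) (a symmetric function d: V×V → [1,∞) with d(x,x)=1 and d(x,z) ≤ d(x,y)·d(y,z), agreeing with w on edges) if and only if w(e) ≥ 1 for every edge e ∈ E(G) and for every cycle C ⊆ G and every edge e ∈ E(C), w(e) ≤ ∏_{ẽ ∈ E(C), ẽ ≠ e} w(ẽ). -/

import Mathlib

open scoped NNReal
open SimpleGraph

section Aux

variable {V : Type*} (G : SimpleGraph V) (w : Sym2 V → ℝ≥0)

/-- Multiplicative weight of a walk. -/
noncomputable def mwt {x y : V} (p : G.Walk x y) : ℝ≥0 := (p.edges.map w).prod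

noncomputable def mdist (x y : V) : ℝ≥0 := sInf {r | ∃ p : G.Walk x y, mwt G w p = r}

variable {G w}

lemma one_le_mwt (h1 : ∀ u v, G.Adj u v → 1 ≤ w s(u, v)) {x y : V} (p : G.Walk x y) :
    1 ≤ mwt G w p := by
  apply List.one_le_prod_of_one_le
  intro r hr
  obtain ⟨e, he, rfl⟩ := List.mem_map.mp hr
  induction e using Sym2.ind with
  | _ u v => exact h1 u v (p.adj_of_mem_edges he)

lemma mdist_le {x y : V} (p : G.Walk x y) :
    mdist G w x y ≤ mwt G w p :=
  csInf_le (OrderBot.bddBelow _) ⟨p, rfl⟩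

lemma one_le_mdist (h1 : ∀ u v, G.Adj u v → 1 ≤ w s(u, v)) {x y : V} (h : G.Reachable x y) :
    1 ≤ mdist G w x y := by
  obtain ⟨p⟩ := h
  exact le_csInf ⟨_, p, rfl⟩ (by rintro r ⟨q, rfl⟩; exact one_le_mwt h1 q)

lemma mwt_reverse {x y : V} (p : G.Walk x y) : mwt G w p.reverse = mwt G w p := by
  simp [mwt, SimpleGraph.Walk.edges_reverse, List.prod_reverse]

lemma mdist_symm (x y : V) : mdist G w x y = mdist G w y x := by
  unfold mdist
  congr 1
  ext r
  constructor
  · rintro ⟨p, rfl⟩; exact ⟨p.reverse, mwt_reverse p⟩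
  · rintro ⟨p, rfl⟩; exact ⟨p.reverse, mwt_reverse p⟩

lemma mdist_self (h1 : ∀ u v, G.Adj u v → 1 ≤ w s(u, v)) (x : V) : mdist G w x x = 1 :=
  le_antisymm (by simpa [mwt] using mdist_le (SimpleGraph.Walk.nil : G.Walk x x))
    (one_le_mdist h1 (SimpleGraph.Reachable.refl x))

lemma mwt_append {x y z : V} (p : G.Walk x y) (q : G.Walk y z) :
    mwt G w (p.append q) = mwt G w p * mwt G w q := by
  simp [mwt, SimpleGraph.Walk.edges_append]

lemma mdist_triangle (h1 : ∀ u v, G.Adj u v → 1 ≤ w s(u, v)) {x y z : V}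
    (hxy : G.Reachable x y) (hyz : G.Reachable y z) :
    mdist G w x z ≤ mdist G w x y * mdist G w y z := by
  have hyz1 : (1 : ℝ≥0) ≤ mdist G w y z := one_le_mdist h1 hyz
  have hyz0 : mdist G w y z ≠ 0 := by positivity
  rw [← div_le_iff₀ (pos_iff_ne_zero.mpr hyz0)]
  apply le_csInf (by obtain ⟨p⟩ := hxy; exact ⟨_, p, rfl⟩)
  rintro r ⟨p, rfl⟩
  have hp1 : (1 : ℝ≥0) ≤ mwt G w p := one_le_mwt h1 p
  have hp0 : mwt G w p ≠ 0 := by positivity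
  rw [div_le_iff₀ (pos_iff_ne_zero.mpr hyz0), mul_comm (mwt G w p),
    ← div_le_iff₀ (pos_iff_ne_zero.mpr hp0)]
  apply le_csInf (by obtain ⟨q⟩ := hyz; exact ⟨_, q, rfl⟩)
  rintro r ⟨q, rfl⟩
  rw [div_le_iff₀ (pos_iff_ne_zero.mpr hp0)]
  calc mdist G w x z ≤ mwt G w (p.append q) := mdist_le _
    _ = mwt G w q * mwt G w p := by rw [mwt_append, mul_comm]

/-- Products over lists: nodup subset. -/
lemma list_prod_le [DecidableEq (Sym2 V)] {l₁ l₂ : List (Sym2 V)} (hn : l₁.Nodup) (hs : l₁ ⊆ l₂)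
    (h1 : ∀ e ∈ l₂, 1 ≤ w e) : (l₁.map w).prod ≤ (l₂.map w).prod := by
  induction l₂ generalizing l₁ with
  | nil =>
    have : l₁ = [] := List.eq_nil_iff_forall_not_mem.mpr fun a ha => by simpa using hs ha
    simp [this]
  | cons a t ih =>
    by_cases ha : a ∈ l₁
    · have hperm : l₁.Perm (a :: l₁.erase a) := List.perm_cons_erase ha
      have : (l₁.map w).prod = w a * ((l₁.erase a).map w).prod := by
        rw [(hperm.map w).prod_eq, List.map_cons, List.prod_cons]
      rw [this]
      simp only [List.map_cons, List.prod_cons]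
      refine mul_le_mul_right (ih (hn.erase a) ?_ (fun e he => h1 e (List.mem_cons_of_mem a he))) _
      intro x hx
      have hxl : x ∈ l₁ := List.mem_of_mem_erase hx
      have hxa : x ≠ a := (List.Nodup.mem_erase_iff hn).mp hx |>.1
      rcases List.mem_cons.mp (hs hxl) with h | h
      · exact absurd h hxa
      · exact h
    · have hsub : l₁ ⊆ t := fun x hx => by
        rcases List.mem_cons.mp (hs hx) with h | h
        · exact absurd (h ▸ hx) ha
        · exact h
      calc (l₁.map w).prod ≤ (t.map w).prod := ih hn hsub (fun e he => h1 e (List.mem_cons_of_mem a he))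
        _ ≤ w a * (t.map w).prod := le_mul_of_one_le_left' (h1 a List.mem_cons_self)
        _ = ((a :: t).map w).prod := by simp

lemma mdist_adj (h1 : ∀ u v, G.Adj u v → 1 ≤ w s(u, v))
    (h2 : ∀ (a b : V) (h : G.Adj a b) (p : G.Walk b a),
        (SimpleGraph.Walk.cons h p).IsCycle → w s(a, b) ≤ (p.edges.map w).prod)
    {u v : V} (huv : G.Adj u v) : mdist G w u v = w s(u, v) := by
  classical
  refine le_antisymm ?_ ?_
  · have : mwt G w (SimpleGraph.Walk.cons huv SimpleGraph.Walk.nil) = w s(u, v) := by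
      simp [mwt]
    exact this ▸ mdist_le _
  · refine le_csInf ⟨_, SimpleGraph.Walk.cons huv SimpleGraph.Walk.nil, rfl⟩ ?_
    rintro r ⟨p, rfl⟩
    have hb : mwt G w p.bypass ≤ mwt G w p := by
      apply list_prod_le (p.bypass_isPath.edges_nodup) (p.edges_bypass_subset)
      intro e he
      induction e using Sym2.ind with
      | _ a b => exact h1 a b (p.adj_of_mem_edges he)
    refine le_trans ?_ hb
    set q := p.bypass with hq
    have hqp : q.IsPath := p.bypass_isPath
    by_cases hmem : s(u, v) ∈ q.edges
    · exact List.single_le_prod (fun x hx => by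
        obtain ⟨e, he, rfl⟩ := List.mem_map.mp hx
        induction e using Sym2.ind with
        | _ a b => exact h1 a b (q.adj_of_mem_edges he)) _
        (List.mem_map.mpr ⟨_, hmem, rfl⟩)
    · have hcyc : (SimpleGraph.Walk.cons huv.symm q).IsCycle := by
        rw [SimpleGraph.Walk.cons_isCycle_iff]
        exact ⟨hqp, by rw [Sym2.eq_swap]; exact hmem⟩
      have := h2 v u huv.symm q hcyc
      rwa [Sym2.eq_swap] at this

end Aux

/-- `w` extends to a pseudomultiplicative metric on `V(G)` iff
`w(e) ≥ 1` for every edge and, for every cycle `C` and every edge `e ∈ E(C)`,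
`w(e) ≤ ∏_{ẽ ∈ C∖e} w(ẽ)`. -/
theorem stmt_15 {V : Type*} (G : SimpleGraph V) (w : Sym2 V → ℝ≥0) :
    (∃ d : V → V → ℝ≥0,
        (∀ x y, 1 ≤ d x y) ∧ (∀ x y, d x y = d y x) ∧ (∀ x, d x x = 1) ∧
        (∀ x y z, d x z ≤ d x y * d y z) ∧
        ∀ u v, G.Adj u v → d u v = w s(u, v)) ↔
    ((∀ u v, G.Adj u v → 1 ≤ w s(u, v)) ∧
      ∀ (a b : V) (h : G.Adj a b) (p : G.Walk b a),
        (SimpleGraph.Walk.cons h p).IsCycle →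
        w s(a, b) ≤ (p.edges.map w).prod) := by
  constructor
  · rintro ⟨d, hd1, hdsymm, hdself, hdtri, hdw⟩
    constructor
    · intro u v huv
      rw [← hdw u v huv]; exact hd1 u v
    · intro a b h p _
      have key : ∀ (x y : V) (q : G.Walk x y), d x y ≤ (q.edges.map w).prod := by
        intro x y q
        induction q with
        | nil => simp [hdself]
        | cons h' q' ih =>
          rename_i x' m y'
          calc d x' y' ≤ d x' m * d m y' := hdtri x' m y'
            _ ≤ w s(x', m) * (q'.edges.map w).prod := by
                rw [hdw _ _ h']
                exact mul_le_mul_right ih _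
            _ = ((SimpleGraph.Walk.cons h' q').edges.map w).prod := by simp
      calc w s(a, b) = d a b := (hdw a b h).symm
        _ = d b a := hdsymm a b
        _ ≤ (p.edges.map w).prod := key b a p
  · rintro ⟨h1, h2⟩
    classical
    set g : V → ℝ≥0 := fun x => mdist G w x (G.connectedComponentMk x).out with hg
    have hrep : ∀ x : V, G.Reachable x (G.connectedComponentMk x).out := fun x =>
      SimpleGraph.ConnectedComponent.exact ((G.connectedComponentMk x).out_eq).symm
    have hg1 : ∀ x, 1 ≤ g x := fun x => one_le_mdist h1 (hrep x)
    have hout : ∀ {x y : V}, G.Reachable x y →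
        (G.connectedComponentMk x).out = (G.connectedComponentMk y).out := by
      intro x y hxy
      rw [SimpleGraph.ConnectedComponent.sound hxy]
    refine ⟨fun x y => if G.Reachable x y then mdist G w x y else g x * g y, ?_, ?_, ?_, ?_, ?_⟩
    · intro x y
      by_cases h : G.Reachable x y
      · simpa [h] using one_le_mdist h1 h
      · simp only [h, if_false]
        exact one_le_mul (hg1 x) (hg1 y)
    · intro x y
      by_cases h : G.Reachable x y
      · simp [h, h.symm, mdist_symm]
      · have h' : ¬ G.Reachable y x := fun hc => h hc.symm
        simp [h, h', mul_comm]
    · intro x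
      show (if G.Reachable x x then mdist G w x x else g x * g x) = 1
      rw [if_pos (SimpleGraph.Reachable.refl x)]
      exact mdist_self h1 x
    · intro x y z
      by_cases hxy : G.Reachable x y <;> by_cases hyz : G.Reachable y z
      · have hxz : G.Reachable x z := hxy.trans hyz
        simp only [hxy, hyz, hxz, if_true]
        exact mdist_triangle h1 hxy hyz
      · have hxz : ¬ G.Reachable x z := fun hc => hyz (hxy.symm.trans hc)
        simp only [hxy, hyz, hxz, if_true, if_false]
        have : g x ≤ mdist G w x y * g y := by
          rw [hg]
          simp only
          rw [hout hxy]
          exact mdist_triangle h1 hxy (hrep y)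
        calc g x * g z ≤ (mdist G w x y * g y) * g z := mul_le_mul_left this _
          _ = mdist G w x y * (g y * g z) := by ring
      · have hxz : ¬ G.Reachable x z := fun hc => hxy (hc.trans hyz.symm)
        simp only [hxy, hyz, hxz, if_true, if_false]
        have : g z ≤ g y * mdist G w y z := by
          rw [hg]
          simp only
          rw [← hout hyz, mdist_symm]
          calc mdist G w (G.connectedComponentMk y).out z
              ≤ mdist G w (G.connectedComponentMk y).out y * mdist G w y z :=
                mdist_triangle h1 (hrep y).symm hyz
            _ = g y * mdist G w y z := by rw [mdist_symm]
        calc g x * g z ≤ g x * (g y * mdist G w y z) := mul_le_mul_right this _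
          _ = g x * g y * mdist G w y z := by ring
      · by_cases hxz : G.Reachable x z
        · simp only [hxy, hyz, hxz, if_true, if_false]
          have hx : g x = mdist G w x (G.connectedComponentMk x).out := rfl
          have hz : g z = mdist G w z (G.connectedComponentMk x).out := by
            rw [hg]; simp only; rw [hout hxz.symm]
          have key : mdist G w x z ≤ g x * g z := by
            have h' : G.Reachable (G.connectedComponentMk x).out z := (hrep x).symm.trans hxz
            rw [hx, hz, mdist_symm z]
            exact mdist_triangle h1 (hrep x) h'
          calc mdist G w x z ≤ g x * g z := key
            _ = (g x * g z) * 1 := by ring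
            _ ≤ (g x * g z) * (g y * g y) := mul_le_mul_right (one_le_mul (hg1 y) (hg1 y)) _
            _ = (g x * g y) * (g y * g z) := by ring
        · simp only [hxy, hyz, hxz, if_false]
          calc g x * g z ≤ (g x * g y) * (g y * g z) := by
                have := one_le_mul (hg1 y) (hg1 y)
                calc g x * g z = (g x * g z) * 1 := by ring
                  _ ≤ (g x * g z) * (g y * g y) := mul_le_mul_right (one_le_mul (hg1 y) (hg1 y)) _
                  _ = (g x * g y) * (g y * g z) := by ring
            _ = g x * g y * (g y * g z) := rfl
    · intro u v huv
      have h : G.Reachable u v := huv.reachable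
      simp only [h, if_true]
      exact mdist_adj h1 h2 huv
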